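/- Let v ∈ ℝ^q with v ∉ P, let (x^v, z^v) be an optimal solution of (P(v)) and w^v an optimal solution of (D(v)), and let H := {y ∈ ℝ^q : (w^v)ᵀy ≥ (w^v)ᵀΓ(x^v)}. If ‖z^v‖ ≥ ε for some ε > 0, then every y ∈ H satisfies ‖y − v‖ ≥ ε; in particular B ∩ H = ∅, where B := {y ∈ {v} + C : ‖y − v‖ ≤ ε/2}. -/

import Mathlib

open Set Pointwise

noncomputable section

/-- Dot product on `Fin q → ℝ`. -/
def dotp {q : ℕ} (w y : Fin q → ℝ) : ℝ := ∑ i, w i * y i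

/-- `N` is a norm on `Fin q → ℝ`. -/
def IsNormFn {q : ℕ} (N : (Fin q → ℝ) → ℝ) : Prop :=
  (∀ z, N z = 0 ↔ z = 0) ∧ (∀ (a : ℝ) (z : Fin q → ℝ), N (a • z) = |a| * N z) ∧
    (∀ z w, N (z + w) ≤ N z + N w)

/-- Dual norm of `N`. -/
def dualNormFn {q : ℕ} (N : (Fin q → ℝ) → ℝ) (w : Fin q → ℝ) : ℝ :=
  sSup ((fun z => dotp w z) '' {z | N z ≤ 1})

/-- Distance (w.r.t. the norm `N`) from a point to a set. -/
def distFn {q : ℕ} (N : (Fin q → ℝ) → ℝ) (v : Fin q → ℝ) (A : Set (Fin q → ℝ)) : ℝ :=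
  sInf ((fun y => N (v - y)) '' A)

/-- Dual cone of a set. -/
def dualCone' {q : ℕ} (C : Set (Fin q → ℝ)) : Set (Fin q → ℝ) :=
  {w | ∀ y ∈ C, 0 ≤ dotp w y}

lemma normFn_nonneg {q : ℕ} {N : (Fin q → ℝ) → ℝ} (hN : IsNormFn N) (z : Fin q → ℝ) :
    0 ≤ N z := by
  have h0 : N 0 = 0 := (hN.1 0).2 rfl
  have hneg : N (-z) = N z := by simpa using hN.2.1 (-1) z
  have h := hN.2.2 z (-z)
  rw [add_neg_cancel, h0, hneg] at h
  linarith

lemma dotp_smul {q : ℕ} (w : Fin q → ℝ) (t : ℝ) (z : Fin q → ℝ) :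
    dotp w (t • z) = t * dotp w z := by
  simp only [dotp, Pi.smul_apply, smul_eq_mul, Finset.mul_sum]
  exact Finset.sum_congr rfl fun i _ => by ring

lemma dotp_sub {q : ℕ} (w a b : Fin q → ℝ) :
    dotp w (a - b) = dotp w a - dotp w b := by
  simp [dotp, ← Finset.sum_sub_distrib, mul_sub]

lemma normFn_continuous {q : ℕ} {N : (Fin q → ℝ) → ℝ} (hN : IsNormFn N) :
    Continuous N := by
  set K : ℝ := ∑ i : Fin q, N (Pi.single i 1) with hK
  have hKnn : 0 ≤ K := Finset.sum_nonneg fun i _ => normFn_nonneg hN _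
  have hbound : ∀ z : Fin q → ℝ, N z ≤ K * ‖z‖ := by
    intro z
    have hsub : N (∑ i : Fin q, (Pi.single i (z i) : Fin q → ℝ))
        ≤ ∑ i : Fin q, N (Pi.single i (z i) : Fin q → ℝ) :=
      Finset.le_sum_of_subadditive N ((hN.1 0).2 rfl).le hN.2.2 _ _
    have heach : ∀ i : Fin q,
        N (Pi.single i (z i) : Fin q → ℝ) = |z i| * N (Pi.single i 1) := by
      intro i
      have h : (Pi.single i (z i) : Fin q → ℝ) = (z i) • (Pi.single i 1 : Fin q → ℝ) := by
        funext j; by_cases h : j = i <;> simp [Pi.single_apply, h]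
      rw [h, hN.2.1]
    calc N z = N (∑ i : Fin q, (Pi.single i (z i) : Fin q → ℝ)) := by
          rw [Finset.univ_sum_single]
      _ ≤ ∑ i : Fin q, N (Pi.single i (z i) : Fin q → ℝ) := hsub
      _ = ∑ i : Fin q, |z i| * N (Pi.single i 1) := by simp [heach]
      _ ≤ ∑ i : Fin q, ‖z‖ * N (Pi.single i 1) := by
          apply Finset.sum_le_sum; intro i _
          exact mul_le_mul_of_nonneg_right (by simpa using norm_le_pi_norm z i)
            (normFn_nonneg hN _)
      _ = K * ‖z‖ := by
          rw [hK, Finset.sum_mul]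
          exact Finset.sum_congr rfl fun i _ => mul_comm _ _
  have hlip : ∀ a b : Fin q → ℝ, |N a - N b| ≤ K * ‖a - b‖ := by
    intro a b
    have h1 : N a ≤ N (a - b) + N b := by
      have := hN.2.2 (a - b) b; simpa using this
    have h2 : N b ≤ N (b - a) + N a := by
      have := hN.2.2 (b - a) a; simpa using this
    have hba : N (b - a) = N (a - b) := by
      have h : (b - a) = (-1 : ℝ) • (a - b) := by funext j; simp
      rw [h, hN.2.1]; simp
    have := hbound (a - b)
    rw [abs_sub_le_iff]; constructor <;> linarith [hba ▸ h2]
  have : LipschitzWith (Real.toNNReal K) N := by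
    apply LipschitzWith.of_dist_le_mul
    intro a b
    rw [Real.dist_eq, Real.coe_toNNReal K hKnn]
    calc |N a - N b| ≤ K * ‖a - b‖ := hlip a b
      _ = K * dist a b := by rw [dist_eq_norm]
  exact this.continuous

lemma normFn_lower {q : ℕ} {N : (Fin q → ℝ) → ℝ} (hN : IsNormFn N) :
    ∃ c : ℝ, 0 < c ∧ ∀ z : Fin q → ℝ, c * ‖z‖ ≤ N z := by
  rcases (Metric.sphere (0 : Fin q → ℝ) 1).eq_empty_or_nonempty with hS | hS
  · refine ⟨1, one_pos, fun z => ?_⟩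
    by_cases hz : z = 0
    · simp [hz, normFn_nonneg hN 0, (hN.1 0).2 rfl]
    · exfalso
      have : (‖z‖⁻¹ • z) ∈ Metric.sphere (0 : Fin q → ℝ) 1 := by
        simp [norm_smul, abs_of_nonneg (inv_nonneg.2 (norm_nonneg z)),
          inv_mul_cancel₀ (norm_ne_zero_iff.2 hz)]
      rw [hS] at this; exact this
  · obtain ⟨z₀, hz₀S, hmin⟩ :=
      (isCompact_sphere (0 : Fin q → ℝ) 1).exists_isMinOn hS
        (normFn_continuous hN).continuousOn
    have hz₀norm : ‖z₀‖ = 1 := by simpa using hz₀S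
    have hz₀ne : z₀ ≠ 0 := by
      intro h; rw [h] at hz₀norm; simp at hz₀norm
    have hc : 0 < N z₀ := by
      rcases lt_or_eq_of_le (normFn_nonneg hN z₀) with h | h
      · exact h
      · exact absurd ((hN.1 z₀).1 h.symm) hz₀ne
    refine ⟨N z₀, hc, fun z => ?_⟩
    by_cases hz : z = 0
    · simp [hz, (hN.1 0).2 rfl]
    · have hnz : (0:ℝ) < ‖z‖ := norm_pos_iff.2 hz
      have hmem : (‖z‖⁻¹ • z) ∈ Metric.sphere (0 : Fin q → ℝ) 1 := by
        simp [norm_smul, abs_of_nonneg (inv_nonneg.2 (norm_nonneg z)),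
          inv_mul_cancel₀ (ne_of_gt hnz)]
      have h1 : N z₀ ≤ N (‖z‖⁻¹ • z) := hmin hmem
      rw [hN.2.1, abs_of_nonneg (inv_nonneg.2 (norm_nonneg z))] at h1
      have := mul_le_mul_of_nonneg_left h1 (le_of_lt hnz)
      rw [← mul_assoc, mul_inv_cancel₀ (ne_of_gt hnz), one_mul] at this
      linarith [this]

lemma dotp_le_normFn {q : ℕ} {N : (Fin q → ℝ) → ℝ} (hN : IsNormFn N)
    {w : Fin q → ℝ} (hw : dualNormFn N w ≤ 1) (z : Fin q → ℝ) :
    dotp w z ≤ N z := by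
  obtain ⟨c, hc, hlow⟩ := normFn_lower hN
  have hbdd : BddAbove ((fun z => dotp w z) '' {z | N z ≤ 1}) := by
    refine ⟨(∑ i : Fin q, |w i|) * c⁻¹, ?_⟩
    rintro s ⟨u, hu, rfl⟩
    have hun : ‖u‖ ≤ c⁻¹ := by
      have h1 := hlow u
      have := le_trans h1 hu
      rw [← le_div_iff₀' hc] at this
      simpa [div_eq_mul_inv] using this
    calc dotp w u ≤ ∑ i : Fin q, |w i| * |u i| := by
          apply Finset.sum_le_sum; intro i _
          calc w i * u i ≤ |w i * u i| := le_abs_self _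
            _ = |w i| * |u i| := abs_mul _ _
      _ ≤ ∑ i : Fin q, |w i| * c⁻¹ := by
          apply Finset.sum_le_sum; intro i _
          exact mul_le_mul_of_nonneg_left
            (le_trans (by simpa using norm_le_pi_norm u i) hun) (abs_nonneg _)
      _ = (∑ i : Fin q, |w i|) * c⁻¹ := by rw [Finset.sum_mul]
  by_cases hz : z = 0
  · simp [hz, dotp, (hN.1 0).2 rfl]
  · have ht : 0 < N z := by
      rcases lt_or_eq_of_le (normFn_nonneg hN z) with h | h
      · exact h
      · exact absurd ((hN.1 z).1 h.symm) hz
    set z' := (N z)⁻¹ • z with hz'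
    have hz'norm : N z' = 1 := by
      rw [hz', hN.2.1, abs_of_nonneg (inv_nonneg.2 (le_of_lt ht)),
        inv_mul_cancel₀ (ne_of_gt ht)]
    have hmem : dotp w z' ∈ (fun z => dotp w z) '' {z | N z ≤ 1} :=
      ⟨z', le_of_eq hz'norm, rfl⟩
    have h1 : dotp w z' ≤ 1 := le_trans (le_csSup hbdd hmem) hw
    have h2 : dotp w z' = (N z)⁻¹ * dotp w z := dotp_smul w _ z
    rw [h2] at h1
    have := mul_le_mul_of_nonneg_left h1 (le_of_lt ht)
    rw [← mul_assoc, mul_inv_cancel₀ (ne_of_gt ht), one_mul, mul_one] at this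
    exact this

/-- if `‖z^v‖ ≥ ε`, then every point of the supporting halfspace `H`
is at distance at least `ε` from `v`; in particular
`B = {y ∈ {v} + C : ‖y − v‖ ≤ ε/2}` is disjoint from `H`. -/
theorem stmt16 {q n : ℕ}
    (N : (Fin q → ℝ) → ℝ) (hN : IsNormFn N)
    (C : Set (Fin q → ℝ))
    (hCclosed : IsClosed C) (hCconv : Convex ℝ C)
    (hCcone : ∀ t : ℝ, 0 ≤ t → ∀ y ∈ C, t • y ∈ C)
    (hCsolid : (interior C).Nonempty)
    (hCpointed : ∀ y ∈ C, -y ∈ C → y = 0)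
    (hCnontriv : {(0 : Fin q → ℝ)} ⊂ C ∧ C ⊂ Set.univ)
    (X : Set (Fin n → ℝ)) (hX : IsCompact X) (hXconv : Convex ℝ X)
    (hXint : (interior X).Nonempty)
    (Γ : (Fin n → ℝ) → (Fin q → ℝ)) (hΓ : ContinuousOn Γ X)
    (hΓconv : ∀ x₁ ∈ X, ∀ x₂ ∈ X, ∀ t : ℝ, t ∈ Icc (0:ℝ) 1 →
      t • Γ x₁ + (1 - t) • Γ x₂ - Γ (t • x₁ + (1 - t) • x₂) ∈ C)
    (v : Fin q → ℝ) (hv : v ∉ Γ '' X + C)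
    (xv : Fin n → ℝ) (zv : Fin q → ℝ) (wv : Fin q → ℝ)
    (hxv : xv ∈ X) (hfeas : v + zv - Γ xv ∈ C)
    (hzopt : N zv = distFn N v (Γ '' X + C))
    (hwv : wv ∈ dualCone' C) (hwnorm : dualNormFn N wv ≤ 1)
    (hwopt : sInf ((fun x => dotp wv (Γ x)) '' X) - dotp wv v
      = distFn N v (Γ '' X + C))
    (ε : ℝ) (hε : 0 < ε) (hz : ε ≤ N zv) :
    (∀ y ∈ {y : Fin q → ℝ | dotp wv (Γ xv) ≤ dotp wv y}, ε ≤ N (y - v)) ∧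
    {y : Fin q → ℝ | y - v ∈ C ∧ N (y - v) ≤ ε / 2}
      ∩ {y : Fin q → ℝ | dotp wv (Γ xv) ≤ dotp wv y} = ∅ := by
  have hdual : ∀ z, dotp wv z ≤ N z := dotp_le_normFn hN hwnorm
  have hcont : Continuous fun z : Fin q → ℝ => dotp wv z := by
    unfold dotp
    exact continuous_finset_sum _ fun i _ => continuous_const.mul (continuous_apply i)
  have hBdd : BddBelow ((fun x => dotp wv (Γ x)) '' X) :=
    (hX.image_of_continuousOn (hcont.comp_continuousOn hΓ)).bddBelow
  have hinf_le : sInf ((fun x => dotp wv (Γ x)) '' X) ≤ dotp wv (Γ xv) :=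
    csInf_le hBdd ⟨xv, hxv, rfl⟩
  have key : ∀ y ∈ {y : Fin q → ℝ | dotp wv (Γ xv) ≤ dotp wv y}, ε ≤ N (y - v) := by
    intro y hy
    simp only [Set.mem_setOf_eq] at hy
    have h1 : ε ≤ dotp wv y - dotp wv v := by
      have := hwopt
      have hd : ε ≤ distFn N v (Γ '' X + C) := hz.trans (le_of_eq hzopt)
      have : ε ≤ sInf ((fun x => dotp wv (Γ x)) '' X) - dotp wv v := by linarith [hwopt]
      linarith [hinf_le, hy]
    calc ε ≤ dotp wv y - dotp wv v := h1
      _ = dotp wv (y - v) := (dotp_sub wv y v).symm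
      _ ≤ N (y - v) := hdual _
  refine ⟨key, ?_⟩
  ext y
  simp only [Set.mem_inter_iff, Set.mem_setOf_eq, Set.mem_empty_iff_false, iff_false]
  rintro ⟨⟨-, hle⟩, hH⟩
  have := key y hH
  linarith
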